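/- Let f : X → ℝ be Borel, μ(t) := m({|f| > t}), and suppose μ(t₀) < ∞ for some t₀. For a bounded open set B of finite measure, the set N = {t ≥ t₀ : m({|f| = t} ∩ B) > 0} is countable, and the map t ↦ Per({|f| > t}, B) restricted to [t₀, ∞) \ N is lower semi-continuous (hence the full map t ↦ Per({|f| > t}, B) is Borel measurable on [t₀, ∞)). -/

import Mathlib

open MeasureTheory Set ENNReal Filter
open scoped symmDiff

/-- Measurability of `t ↦ Per({|f| > t}, B)`. The perimeter `Per(·, B)` is abstracted as a
functional on sets which is lower semi-continuous under `L¹(B)` convergence of indicator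
functions. Conclusions: the exceptional set `N = {t ≥ t₀ : m({|f| = t} ∩ B) > 0}` is countable,
`t ↦ Per({|f| > t}, B)` is lower semi-continuous on `[t₀, ∞) \ N`, and it is Borel measurable on
`[t₀, ∞)`. -/
theorem stmt17 {X : Type*} [MetricSpace X] [MeasurableSpace X] [BorelSpace X]
    (m : Measure X) (f : X → ℝ) (hf : Measurable f)
    (t₀ : ℝ) (hμt₀ : m {x | t₀ < |f x|} < ⊤)
    (B : Set X) (hBopen : IsOpen B) (hBbd : Bornology.IsBounded B) (hBfin : m B < ⊤)
    (Per : Set X → ℝ≥0∞)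
    (hPerLSC : ∀ (E : Set X) (Es : ℕ → Set X),
      Tendsto (fun n => m ((Es n ∆ E) ∩ B)) atTop (nhds 0) →
      Per E ≤ Filter.atTop.liminf fun n => Per (Es n)) :
    {t : ℝ | t₀ ≤ t ∧ 0 < m ({x | |f x| = t} ∩ B)}.Countable ∧
    LowerSemicontinuousOn (fun t => Per {x | t < |f x|})
      (Set.Ici t₀ \ {t : ℝ | t₀ ≤ t ∧ 0 < m ({x | |f x| = t} ∩ B)}) ∧
    Measurable fun t : Set.Ici t₀ => Per {x | (t : ℝ) < |f x|} := by
  set g : X → ℝ := fun x => |f x| with hg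
  have hgm : Measurable g := hf.abs
  set ν : Measure X := m.restrict B with hν
  haveI : IsFiniteMeasure ν := ⟨by rwa [hν, Measure.restrict_apply_univ]⟩
  have hνapp : ∀ s : Set X, MeasurableSet s → ν s = m (s ∩ B) := fun s hs => by
    rw [hν, Measure.restrict_apply hs]
  set N : Set ℝ := {t : ℝ | t₀ ≤ t ∧ 0 < m ({x | |f x| = t} ∩ B)} with hN
  -- Countability of N
  have hNc : N.Countable := by
    have h1 : {t : ℝ | 0 < ν {x | g x = t}}.Countable :=
      Measure.countable_meas_level_set_pos hgm
    refine h1.mono fun t ht => ?_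
    have : ν {x | g x = t} = m ({x | |f x| = t} ∩ B) :=
      hνapp _ (hgm (measurableSet_singleton t))
    simp only [mem_setOf_eq, this]
    exact ht.2
  -- Key convergence lemma
  have key : ∀ t : ℝ, m ({x | |f x| = t} ∩ B) = 0 → ∀ u : ℕ → ℝ,
      Tendsto u atTop (nhds t) →
      Tendsto (fun n => m (({x | u n < |f x|} ∆ {x | t < |f x|}) ∩ B)) atTop (nhds 0) := by
    intro t ht u hu
    set A : ℝ → Set X := fun δ => {x | t - δ < |f x| ∧ |f x| ≤ t + δ} with hA
    have hAm : ∀ δ, MeasurableSet (A δ) :=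
      fun δ => (measurableSet_lt measurable_const hf.abs).inter
        (measurableSet_le hf.abs measurable_const)
    have hAmono : ∀ δ₁ δ₂ : ℝ, δ₁ ≤ δ₂ → A δ₁ ⊆ A δ₂ := by
      intro δ₁ δ₂ h x hx
      exact ⟨lt_of_le_of_lt (by linarith) hx.1, hx.2.trans (by linarith)⟩
    have hincl : ∀ s : ℝ, ∀ δ : ℝ, |s - t| ≤ δ →
        ({x | s < |f x|} ∆ {x | t < |f x|}) ⊆ A δ := by
      intro s δ hδ x hx
      have h1 := (abs_le.1 hδ).1
      have h2 := (abs_le.1 hδ).2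
      rcases hx with ⟨hx1, hx2⟩ | ⟨hx1, hx2⟩ <;>
        simp only [mem_setOf_eq, not_lt] at hx1 hx2 <;>
        exact ⟨by linarith, by linarith⟩
    -- ν (A (1/(k+1))) → ν {g = t} = 0
    have hInter : (⋂ k : ℕ, A (1 / (k + 1))) = {x | |f x| = t} := by
      ext x
      simp only [hA, mem_iInter, mem_setOf_eq]
      constructor
      · intro h
        have h1 : ∀ k : ℕ, t - 1 / (k + 1) < |f x| := fun k => (h k).1
        have h2 : ∀ k : ℕ, |f x| ≤ t + 1 / (k + 1) := fun k => (h k).2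
        have hle : |f x| ≤ t := by
          by_contra hc
          push_neg at hc
          obtain ⟨k, hk⟩ := exists_nat_one_div_lt (sub_pos.2 hc)
          exact absurd (h2 k) (by push_neg; linarith)
        have hge : t ≤ |f x| := by
          by_contra hc
          push_neg at hc
          obtain ⟨k, hk⟩ := exists_nat_one_div_lt (sub_pos.2 hc)
          exact absurd (h1 k) (by push_neg; linarith)
        linarith
      · intro h
        intro k
        have hp : (0:ℝ) < 1 / ((k:ℝ) + 1) := by positivity
        exact ⟨by linarith, by linarith⟩
    have hmeas : MeasurableSet {x : X | |f x| = t} := hf.abs (measurableSet_singleton t)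
    have hνzero : ν {x | |f x| = t} = 0 := by
      rw [hνapp _ hmeas]; exact ht
    have htend : Tendsto (fun k : ℕ => ν (A (1 / (k + 1)))) atTop (nhds 0) := by
      have := tendsto_measure_iInter_atTop (μ := ν)
        (s := fun k : ℕ => A (1 / (k + 1)))
        (fun k => (hAm _).nullMeasurableSet)
        (fun i j hij => hAmono _ _ (by
          apply div_le_div_of_nonneg_left one_pos.le (by positivity)
          exact_mod_cast add_le_add (Nat.cast_le.2 hij) (le_refl (1:ℝ))))
        ⟨0, measure_ne_top ν _⟩
      rwa [hInter, hνzero] at this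
    rw [ENNReal.tendsto_atTop_zero]
    intro ε hε
    rcases eq_top_or_lt_top ε with rfl | hεlt
    · exact ⟨0, fun n _ => le_top⟩
    obtain ⟨k, hk⟩ : ∃ k : ℕ, ν (A (1 / (k + 1))) < ε := by
      rcases ENNReal.tendsto_atTop_zero.1 htend (ε / 2)
        (ENNReal.half_pos hε.ne') with ⟨M, hM⟩
      exact ⟨M, lt_of_le_of_lt (hM M le_rfl) (ENNReal.half_lt_self hε.ne' hεlt.ne)⟩
    have hδpos : (0:ℝ) < 1 / (k + 1) := by positivity
    have : ∀ᶠ n in atTop, |u n - t| ≤ 1 / (k + 1) := by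
      have := Metric.tendsto_atTop.1 hu (1 / (k + 1)) hδpos
      rcases this with ⟨M, hM⟩
      exact eventually_atTop.2 ⟨M, fun n hn => le_of_lt (by
        have := hM n hn; rwa [Real.dist_eq] at this)⟩
    rcases this.exists_forall_of_atTop with ⟨M, hM⟩
    refine ⟨M, fun n hn => ?_⟩
    have hsub : ({x | u n < |f x|} ∆ {x | t < |f x|}) ∩ B ⊆ A (1 / (k + 1)) ∩ B :=
      inter_subset_inter_left _ (hincl (u n) _ (hM n hn))
    calc m (({x | u n < |f x|} ∆ {x | t < |f x|}) ∩ B)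
        ≤ m (A (1 / (k + 1)) ∩ B) := measure_mono hsub
      _ = ν (A (1 / (k + 1))) := (hνapp _ (hAm _)).symm
      _ ≤ ε := hk.le
  -- Lower semicontinuity on S = Ici t₀ \ N
  set S : Set ℝ := Set.Ici t₀ \ N with hS
  have hLSC : LowerSemicontinuousOn (fun t => Per {x | t < |f x|}) S := by
    intro t htS y hy
    by_contra hcon
    rw [Filter.not_eventually] at hcon
    have hfreq : ∃ᶠ s in nhdsWithin t S, Per {x | s < |f x|} ≤ y := by
      refine hcon.mono fun s hs => ?_
      simpa using not_lt.1 hs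
    obtain ⟨u, hu, hyu⟩ := Filter.exists_seq_forall_of_frequently hfreq
    have hut : Tendsto u atTop (nhds t) := hu.mono_right nhdsWithin_le_nhds
    have hm0 : m ({x | |f x| = t} ∩ B) = 0 := by
      by_contra hc
      exact htS.2 ⟨htS.1, pos_iff_ne_zero.2 hc⟩
    have hle := hPerLSC {x | t < |f x|} (fun n => {x | u n < |f x|})
      (key t hm0 u hut)
    have : Filter.atTop.liminf (fun n => Per {x | u n < |f x|}) ≤ y :=
      Filter.liminf_le_of_frequently_le' (Frequently.of_forall hyu)
    exact absurd hy (not_lt.2 (hle.trans this))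
  refine ⟨hNc, hLSC, ?_⟩
  -- Measurability
  have hNms : MeasurableSet N := hNc.measurableSet
  have hSms : MeasurableSet S := measurableSet_Ici.diff hNms
  -- restriction of the function to S is lower semicontinuous
  have hres : LowerSemicontinuous (S.restrict fun t => Per {x | t < |f x|}) := by
    intro a y hy
    have := hLSC a a.2 y hy
    exact (eventually_nhds_subtype_iff S a _).2 this
  have hresm : Measurable (S.restrict fun t => Per {x | t < |f x|}) :=
    hres.measurable
  apply measurable_of_Ioi
  intro c
  set T : Set (Set.Ici t₀) := (fun t : Set.Ici t₀ => Per {x | (t : ℝ) < |f x|}) ⁻¹' Ioi c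
    with hT
  have hA : MeasurableSet ((fun s : S => (s : ℝ)) ''
      {s : S | c < Per {x | (s : ℝ) < |f x|}}) := by
    apply MeasurableSet.subtype_image hSms
    exact hresm measurableSet_Ioi
  have hTeq : T = (fun t : Set.Ici t₀ => (t : ℝ)) ⁻¹'
      ((fun s : S => (s : ℝ)) '' {s : S | c < Per {x | (s : ℝ) < |f x|}}) ∪
      (T ∩ (fun t : Set.Ici t₀ => (t : ℝ)) ⁻¹' N) := by
    ext t
    simp only [hT, mem_preimage, mem_Ioi, mem_union, mem_inter_iff, mem_image,
      mem_setOf_eq]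
    constructor
    · intro ht
      by_cases hn : (t : ℝ) ∈ N
      · exact Or.inr ⟨ht, hn⟩
      · exact Or.inl ⟨⟨t, ⟨t.2, hn⟩⟩, ht, rfl⟩
    · rintro (⟨s, hs, hst⟩ | ⟨ht, _⟩)
      · rwa [hst] at hs
      · exact ht
  rw [hTeq]
  apply MeasurableSet.union
  · exact measurable_subtype_coe hA
  · apply Set.Countable.measurableSet
    exact Countable.mono inter_subset_right
      (hNc.preimage (Subtype.val_injective))
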